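/- arXiv:0901.0696 — 2 statements merged into one kernel-verified Lean document; each statement's English description precedes it below -/
import Mathlib

section
/- The bivariate generating function F(z,u) = Σ_{t ∈ U} u^{sym(t)} z^{|t|}, summing over all Otter trees t with |t| leaves, satisfies the functional equation F(z,u) = z + (1/2) F(z,u)² + (u − 1/2) F(z², u²) as formal power series. -/
open scoped Classical

/-- Plane binary trees: every node has outdegree 0 or 2. -/
inductive BT where
  | leaf : BT
  | node : BT → BT → BT

/-- Isomorphism of rooted binary trees with *unordered* children. -/
inductive Iso : BT → BT → Prop
  | leaf : Iso .leaf .leaf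
  | node {a b c d} : Iso a c → Iso b d → Iso (.node a b) (.node c d)
  | swap {a b c d} : Iso a d → Iso b c → Iso (.node a b) (.node c d)

theorem Iso.rfl : ∀ t, Iso t t
  | .leaf => .leaf
  | .node l r => .node (Iso.rfl l) (Iso.rfl r)

theorem Iso.symm' {a b : BT} (h : Iso a b) : Iso b a := by
  induction h with
  | leaf => exact .leaf
  | node h1 h2 ih1 ih2 => exact .node ih1 ih2
  | swap h1 h2 ih1 ih2 => exact .swap ih2 ih1

theorem Iso.trans' : ∀ {a b c : BT}, Iso a b → Iso b c → Iso a c := by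
  intro a b c h1
  induction h1 generalizing c with
  | leaf => exact fun h2 => h2
  | node g1 g2 ih1 ih2 =>
      intro h2
      cases h2 with
      | node k1 k2 => exact .node (ih1 k1) (ih2 k2)
      | swap k1 k2 => exact .swap (ih1 k1) (ih2 k2)
  | swap g1 g2 ih1 ih2 =>
      intro h2
      cases h2 with
      | node k1 k2 => exact .swap (ih1 k2) (ih2 k1)
      | swap k1 k2 => exact .node (ih1 k2) (ih2 k1)

instance btSetoid : Setoid BT :=
  ⟨Iso, ⟨Iso.rfl, Iso.symm', Iso.trans'⟩⟩

/-- Otter trees: isomorphism classes of unordered rooted binary trees. -/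
def Otter : Type := Quotient btSetoid

/-- Number of leaves. -/
def leavesBT : BT → ℕ
  | .leaf => 1
  | .node l r => leavesBT l + leavesBT r

/-- Number of internal (binary) nodes. -/
def internalsBT : BT → ℕ
  | .leaf => 0
  | .node l r => internalsBT l + internalsBT r + 1

/-- Number of symmetrical nodes: internal nodes whose two subtrees are isomorphic. -/
noncomputable def symBT : BT → ℕ
  | .leaf => 0
  | .node l r => symBT l + symBT r + (if Iso l r then 1 else 0)

theorem leaves_iso {a b : BT} (h : Iso a b) : leavesBT a = leavesBT b := by
  induction h with
  | leaf => rfl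
  | node h1 h2 ih1 ih2 => simp [leavesBT, ih1, ih2]
  | swap h1 h2 ih1 ih2 => simp [leavesBT, ih1, ih2]; omega

theorem internals_iso {a b : BT} (h : Iso a b) : internalsBT a = internalsBT b := by
  induction h with
  | leaf => rfl
  | node h1 h2 ih1 ih2 => simp [internalsBT, ih1, ih2]
  | swap h1 h2 ih1 ih2 => simp [internalsBT, ih1, ih2]; omega

theorem sym_iso {a b : BT} (h : Iso a b) : symBT a = symBT b := by
  induction h with
  | leaf => rfl
  | @node a b c d h1 h2 ih1 ih2 =>
      have hiff : Iso a b ↔ Iso c d :=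
        ⟨fun hab => (h1.symm'.trans' hab).trans' h2,
         fun hcd => (h1.trans' hcd).trans' h2.symm'⟩
      simp only [symBT, ih1, ih2, if_congr hiff rfl rfl]
  | @swap a b c d h1 h2 ih1 ih2 =>
      have hiff : Iso a b ↔ Iso c d :=
        ⟨fun hab => (h2.symm'.trans' hab.symm').trans' h1,
         fun hcd => (h1.trans' hcd.symm').trans' h2.symm'⟩
      simp only [symBT, ih1, ih2, if_congr hiff rfl rfl]
      omega

def Otter.leaves : Otter → ℕ := Quotient.lift leavesBT fun _ _ h => leaves_iso h
def Otter.internals : Otter → ℕ := Quotient.lift internalsBT fun _ _ h => internals_iso h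
noncomputable def Otter.sym : Otter → ℕ := Quotient.lift symBT fun _ _ h => sym_iso h

/-- The set (as a type) of Otter trees with `n` leaves. -/
def OtterN (n : ℕ) : Type := {q : Otter // q.leaves = n}

/-- Wedderburn–Etherington numbers: number of Otter trees with `n` leaves. -/
noncomputable def WE (n : ℕ) : ℕ := Nat.card (OtterN n)

/-- Binary trees with labeled leaves. -/
inductive LBT where
  | leaf : ℕ → LBT
  | node : LBT → LBT → LBT

/-- Label-preserving isomorphism with unordered children. -/
inductive LIso : LBT → LBT → Prop
  | leaf (k : ℕ) : LIso (.leaf k) (.leaf k)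
  | node {a b c d} : LIso a c → LIso b d → LIso (.node a b) (.node c d)
  | swap {a b c d} : LIso a d → LIso b c → LIso (.node a b) (.node c d)

theorem LIso.rfl : ∀ t, LIso t t
  | .leaf k => .leaf k
  | .node l r => .node (LIso.rfl l) (LIso.rfl r)

theorem LIso.symm' {a b : LBT} (h : LIso a b) : LIso b a := by
  induction h with
  | leaf k => exact .leaf k
  | node h1 h2 ih1 ih2 => exact .node ih1 ih2
  | swap h1 h2 ih1 ih2 => exact .swap ih2 ih1

theorem LIso.trans' : ∀ {a b c : LBT}, LIso a b → LIso b c → LIso a c := by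
  intro a b c h1
  induction h1 generalizing c with
  | leaf k => exact fun h2 => h2
  | node g1 g2 ih1 ih2 =>
      intro h2
      cases h2 with
      | node k1 k2 => exact .node (ih1 k1) (ih2 k2)
      | swap k1 k2 => exact .swap (ih1 k1) (ih2 k2)
  | swap g1 g2 ih1 ih2 =>
      intro h2
      cases h2 with
      | node k1 k2 => exact .swap (ih1 k2) (ih2 k1)
      | swap k1 k2 => exact .node (ih1 k2) (ih2 k1)

instance ltSetoid : Setoid LBT :=
  ⟨LIso, ⟨LIso.rfl, LIso.symm', LIso.trans'⟩⟩

/-- Labeled (phylogenetic-type) trees up to label-preserving isomorphism. -/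
def LTree : Type := Quotient ltSetoid

/-- The multiset of leaf labels. -/
def labelsLT : LBT → Multiset ℕ
  | .leaf k => {k}
  | .node l r => labelsLT l + labelsLT r

/-- The underlying unlabeled shape of a labeled tree. -/
def shapeLT : LBT → BT
  | .leaf _ => .leaf
  | .node l r => .node (shapeLT l) (shapeLT r)

theorem labels_iso {a b : LBT} (h : LIso a b) : labelsLT a = labelsLT b := by
  induction h with
  | leaf k => rfl
  | node h1 h2 ih1 ih2 => simp [labelsLT, ih1, ih2]
  | swap h1 h2 ih1 ih2 => simp [labelsLT, ih1, ih2]; exact add_comm _ _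

theorem shape_iso {a b : LBT} (h : LIso a b) : Iso (shapeLT a) (shapeLT b) := by
  induction h with
  | leaf k => exact .leaf
  | node h1 h2 ih1 ih2 => exact .node ih1 ih2
  | swap h1 h2 ih1 ih2 => exact .swap ih1 ih2

def LTree.labels : LTree → Multiset ℕ := Quotient.lift labelsLT fun _ _ h => labels_iso h

def LTree.shape : LTree → Otter :=
  Quotient.lift (fun t => (⟦shapeLT t⟧ : Otter)) fun _ _ h => Quotient.sound (shape_iso h)

/-- Phylogenetic trees of size `n`: labeled trees whose leaf labels are exactly `1, …, n`. -/
def Phylo (n : ℕ) : Type := {q : LTree // q.labels = (Finset.Icc 1 n).val}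

/-- The number of phylogenetic trees of size `n`. -/
noncomputable def phyloCount (n : ℕ) : ℕ := Nat.card (Phylo n)

/-- The double factorial `n!! = n·(n-2)·(n-4)···`. -/
def doubleFac : ℕ → ℕ
  | 0 => 1
  | 1 => 1
  | (n+2) => (n+2) * doubleFac n

/-- The probability that two independent uniformly random phylogenetic trees of
size `n` are isomorphic (have the same shape). -/
noncomputable def pIso (n : ℕ) : ℚ :=
  (Nat.card {pp : Phylo n × Phylo n // pp.1.1.shape = pp.2.1.shape} : ℚ)
    / (Nat.card (Phylo n) : ℚ) ^ 2

/-- The bivariate generating function `F(z,u) = Σ_t u^{sym t} z^{|t|}` of Otter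
trees, as a power series in `z` with coefficients in `ℚ[u]`. -/
noncomputable def Fgen : PowerSeries (Polynomial ℚ) :=
  PowerSeries.mk fun n => ∑ᶠ t : OtterN n, (Polynomial.X : Polynomial ℚ) ^ t.1.sym

/-- The substituted series `F(z², u²)`. -/
noncomputable def Fgen2 : PowerSeries (Polynomial ℚ) :=
  PowerSeries.mk fun n =>
    if n % 2 = 0 then (PowerSeries.coeff (R := Polynomial ℚ) (n / 2) Fgen).comp (Polynomial.X ^ 2)
    else 0

/-! ### Auxiliary machinery: canonical representatives of Otter trees -/

/-- An injective encoding of plane binary trees into `ℕ`. -/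
def enc : BT → ℕ
  | .leaf => 0
  | .node l r => Nat.pair (enc l) (enc r) + 1

theorem enc_injective : Function.Injective enc := by
  intro a
  induction a with
  | leaf =>
      intro b hb
      cases b with
      | leaf => rfl
      | node c d => simp [enc] at hb
  | node l r ihl ihr =>
      intro b hb
      cases b with
      | leaf => simp [enc] at hb
      | node c d =>
          simp only [enc, Nat.add_right_cancel_iff] at hb
          obtain ⟨h1, h2⟩ := Nat.pair_eq_pair.mp hb
          rw [ihl h1, ihr h2]

/-- Canonical form: sort children by their encoding. -/
def canon : BT → BT
  | .leaf => .leaf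
  | .node l r =>
      if enc (canon l) ≤ enc (canon r) then .node (canon l) (canon r)
      else .node (canon r) (canon l)

theorem canon_canon : ∀ t, canon (canon t) = canon t := by
  intro t
  induction t with
  | leaf => rfl
  | node l r ihl ihr =>
      by_cases h : enc (canon l) ≤ enc (canon r)
      · simp [canon, h, ihl, ihr]
      · simp [canon, h, ihl, ihr, le_of_lt (lt_of_not_ge h)]

theorem iso_canon : ∀ t, Iso t (canon t) := by
  intro t
  induction t with
  | leaf => exact .leaf
  | node l r ihl ihr =>
      by_cases h : enc (canon l) ≤ enc (canon r)
      · simp only [canon, h, if_true]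
        exact .node ihl ihr
      · simp only [canon, h, if_false]
        exact .swap ihl ihr

theorem canon_eq_of_iso {a b : BT} (h : Iso a b) : canon a = canon b := by
  induction h with
  | leaf => rfl
  | node h1 h2 ih1 ih2 => simp only [canon, ih1, ih2]
  | swap h1 h2 ih1 ih2 =>
      simp only [canon, ih1, ih2]
      rcases lt_trichotomy (enc (canon _)) (enc (canon _)) with hlt | heq | hgt
      · rw [if_pos (le_of_lt hlt), if_neg (not_le.mpr hlt)]
      · rw [enc_injective heq]
      · rw [if_neg (not_le.mpr hgt), if_pos (le_of_lt hgt)]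

theorem iso_iff_canon {a b : BT} : Iso a b ↔ canon a = canon b :=
  ⟨canon_eq_of_iso, fun h => ((iso_canon a).trans' (h ▸ (iso_canon b).symm' : Iso (canon a) b))⟩

theorem leaves_canon (t : BT) : leavesBT (canon t) = leavesBT t :=
  (leaves_iso (iso_canon t)).symm

theorem sym_canon (t : BT) : symBT (canon t) = symBT t :=
  (sym_iso (iso_canon t)).symm

theorem leavesBT_pos : ∀ t, 1 ≤ leavesBT t := by
  intro t
  induction t with
  | leaf => exact le_refl 1
  | node l r ihl ihr => simp only [leavesBT]; omega

/-- The set of plane binary trees with `n` leaves is finite. -/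
theorem finite_leavesSet : ∀ n : ℕ, {t : BT | leavesBT t = n}.Finite := by
  intro n
  induction n using Nat.strong_induction_on with
  | _ n ih =>
      rcases Nat.eq_zero_or_pos n with rfl | hn
      · refine Set.Finite.subset (Set.finite_empty) ?_
        intro t ht
        exact absurd (ht ▸ leavesBT_pos t) (by norm_num)
      · have hsub : {t : BT | leavesBT t = n} ⊆
            insert BT.leaf (⋃ a ∈ Finset.range (n - 1),
              (fun p : BT × BT => BT.node p.1 p.2) ''
                ({t | leavesBT t = a + 1} ×ˢ {t | leavesBT t = n - (a + 1)})) := by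
          intro t ht
          cases t with
          | leaf => exact Set.mem_insert _ _
          | node l r =>
              refine Set.mem_insert_iff.mpr (Or.inr ?_)
              simp only [Set.mem_iUnion, Set.mem_image, Finset.mem_range]
              have hl := leavesBT_pos l
              have hr := leavesBT_pos r
              have hlr : leavesBT l + leavesBT r = n := ht
              refine ⟨leavesBT l - 1, by omega, ⟨(l, r), ?_, rfl⟩⟩
              constructor
              · show leavesBT l = _; omega
              · show leavesBT r = _; omega
        refine Set.Finite.subset (Set.Finite.insert _ ?_) hsub
        refine Set.Finite.biUnion (Finset.range (n - 1)).finite_toSet ?_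
        intro a ha
        simp only [Finset.coe_range, Set.mem_Iio] at ha
        exact Set.Finite.image _ (Set.Finite.prod (ih (a + 1) (by omega)) (ih (n - (a + 1)) (by omega)))

/-- The finite set of canonical trees with `n` leaves. -/
noncomputable def Cn (n : ℕ) : Finset BT :=
  (finite_leavesSet n).toFinset.filter fun t => canon t = t

theorem mem_Cn {n : ℕ} {t : BT} : t ∈ Cn n ↔ leavesBT t = n ∧ canon t = t := by
  simp [Cn, Set.Finite.mem_toFinset]

theorem coeff_Fgen (n : ℕ) :
    PowerSeries.coeff (R := Polynomial ℚ) n Fgen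
      = ∑ t ∈ Cn n, (Polynomial.X : Polynomial ℚ) ^ symBT t := by
  have hbij : Function.Bijective
      (fun t : {x // x ∈ Cn n} =>
        (⟨⟦t.1⟧, by
          have := (mem_Cn.mp t.2).1
          simpa [Otter.leaves] using this⟩ : OtterN n)) := by
    constructor
    · rintro ⟨a, ha⟩ ⟨b, hb⟩ hab
      have h : (⟦a⟧ : Otter) = ⟦b⟧ := congrArg Subtype.val hab
      have hiso : Iso a b := Quotient.exact h
      have : canon a = canon b := canon_eq_of_iso hiso
      have ha' := (mem_Cn.mp ha).2
      have hb' := (mem_Cn.mp hb).2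
      exact Subtype.ext (show a = b by rw [← ha', this, hb'])
    · rintro ⟨q, hq⟩
      obtain ⟨t, rfl⟩ := Quotient.exists_rep q
      have hlt : leavesBT t = n := hq
      refine ⟨⟨canon t, mem_Cn.mpr ⟨by rw [leaves_canon, hlt], canon_canon t⟩⟩, ?_⟩
      exact Subtype.ext (Quotient.sound (iso_canon t).symm')
  have h1 : (∑ᶠ t : OtterN n, (Polynomial.X : Polynomial ℚ) ^ t.1.sym)
      = ∑ᶠ t : {x // x ∈ Cn n}, (Polynomial.X : Polynomial ℚ) ^ symBT t.1 := by
    refine (finsum_eq_of_bijective _ hbij ?_).symm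
    intro x
    rfl
  rw [Fgen, PowerSeries.coeff_mk, h1, finsum_eq_sum_of_fintype]
  exact Finset.sum_coe_sort (Cn n) (fun t => (Polynomial.X : Polynomial ℚ) ^ symBT t)

theorem Cn_zero : Cn 0 = ∅ := by
  ext t
  simp only [mem_Cn, Finset.notMem_empty, iff_false, not_and]
  intro h
  have := leavesBT_pos t
  omega

theorem Cn_one : Cn 1 = {BT.leaf} := by
  ext t
  simp only [mem_Cn, Finset.mem_singleton]
  constructor
  · rintro ⟨h1, _⟩
    cases t with
    | leaf => rfl
    | node l r =>
        have hl := leavesBT_pos l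
        have hr := leavesBT_pos r
        have : leavesBT l + leavesBT r = 1 := h1
        omega
  · rintro rfl
    exact ⟨rfl, rfl⟩

theorem node_mem_Cn {n : ℕ} {l r : BT} :
    BT.node l r ∈ Cn n ↔
      canon l = l ∧ canon r = r ∧ enc l ≤ enc r ∧ leavesBT l + leavesBT r = n := by
  simp only [mem_Cn]
  constructor
  · rintro ⟨h1, h2⟩
    by_cases h : enc (canon l) ≤ enc (canon r)
    · simp only [canon, h, if_true, BT.node.injEq] at h2
      exact ⟨h2.1, h2.2, by rwa [h2.1, h2.2] at h, h1⟩
    · simp only [canon, h, if_false, BT.node.injEq] at h2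
      push_neg at h
      rw [h2.1, h2.2] at h
      refine ⟨?_, ?_, le_of_lt h, h1⟩
      · rw [← h2.1]; exact canon_canon r
      · rw [← h2.2]; exact canon_canon l
  · rintro ⟨h1, h2, h3, h4⟩
    refine ⟨h4, ?_⟩
    simp only [canon, h1, h2, if_pos h3]

/-- The set of ordered pairs of canonical trees with total `n` leaves. -/
noncomputable def Qn (n : ℕ) : Finset (BT × BT) :=
  (Finset.HasAntidiagonal.antidiagonal n).biUnion fun ab => Cn ab.1 ×ˢ Cn ab.2

theorem mem_Qn {n : ℕ} {p : BT × BT} :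
    p ∈ Qn n ↔ canon p.1 = p.1 ∧ canon p.2 = p.2 ∧ leavesBT p.1 + leavesBT p.2 = n := by
  simp only [Qn, Finset.mem_biUnion, Finset.HasAntidiagonal.mem_antidiagonal, Finset.mem_product, mem_Cn]
  constructor
  · rintro ⟨⟨a, b⟩, hab, ⟨h1, h2⟩, h3, h4⟩
    exact ⟨h2, h4, by rw [h1, h3]; exact hab⟩
  · rintro ⟨h1, h2, h3⟩
    exact ⟨(leavesBT p.1, leavesBT p.2), h3, ⟨rfl, h1⟩, rfl, h2⟩

theorem sum_Qn_eq_antidiag (n : ℕ) :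
    ∑ p ∈ Qn n, (Polynomial.X : Polynomial ℚ) ^ (symBT p.1 + symBT p.2)
      = ∑ ab ∈ Finset.HasAntidiagonal.antidiagonal n,
          (∑ t ∈ Cn ab.1, (Polynomial.X : Polynomial ℚ) ^ symBT t) *
            (∑ t ∈ Cn ab.2, (Polynomial.X : Polynomial ℚ) ^ symBT t) := by
  rw [Qn, Finset.sum_biUnion]
  · refine Finset.sum_congr rfl fun ab _ => ?_
    rw [Finset.sum_mul_sum, Finset.sum_product]
    simp_rw [pow_add]
  · intro x _ y _ hxy
    simp only [Function.onFun]
    rw [Finset.disjoint_left]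
    intro p hp1 hp2
    rw [Finset.mem_product] at hp1 hp2
    exact hxy (Prod.ext
      (by rw [← (mem_Cn.mp hp1.1).1, (mem_Cn.mp hp2.1).1])
      (by rw [← (mem_Cn.mp hp1.2).1, (mem_Cn.mp hp2.2).1]))

theorem Sn_node (n : ℕ) (hn : 2 ≤ n) :
    ∑ t ∈ Cn n, (Polynomial.X : Polynomial ℚ) ^ symBT t
      = ∑ p ∈ (Qn n).filter (fun p => enc p.1 ≤ enc p.2),
          (Polynomial.X : Polynomial ℚ) ^
            (symBT p.1 + symBT p.2 + if p.1 = p.2 then 1 else 0) := by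
  refine (Finset.sum_bij (fun (p : BT × BT) (_ : p ∈ (Qn n).filter
      (fun p => enc p.1 ≤ enc p.2)) => BT.node p.1 p.2) ?_ ?_ ?_ ?_).symm
  · intro p hp
    rw [Finset.mem_filter, mem_Qn] at hp
    exact node_mem_Cn.mpr ⟨hp.1.1, hp.1.2.1, hp.2, hp.1.2.2⟩
  · intro a _ b _ h
    injection h with h1 h2
    exact Prod.ext h1 h2
  · intro t ht
    cases t with
    | leaf =>
        have : leavesBT BT.leaf = n := (mem_Cn.mp ht).1
        simp [leavesBT] at this
        omega
    | node l r =>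
        obtain ⟨h1, h2, h3, h4⟩ := node_mem_Cn.mp ht
        exact ⟨(l, r), Finset.mem_filter.mpr ⟨mem_Qn.mpr ⟨h1, h2, h4⟩, h3⟩, rfl⟩
  · intro p hp
    rw [Finset.mem_filter, mem_Qn] at hp
    show (Polynomial.X : Polynomial ℚ) ^ _ = (Polynomial.X : Polynomial ℚ) ^ _
    congr 1
    simp only [symBT]
    congr 1
    refine if_congr ?_ rfl rfl
    rw [iso_iff_canon, hp.1.1, hp.1.2.1]

theorem sum_Dg_eq (n : ℕ) :
    ∑ p ∈ (Qn n).filter (fun p => p.1 = p.2),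
        (Polynomial.X : Polynomial ℚ) ^ (symBT p.1 + symBT p.2)
      = if n % 2 = 0 then
          ∑ s ∈ Cn (n / 2), (Polynomial.X : Polynomial ℚ) ^ (2 * symBT s) else 0 := by
  by_cases h : n % 2 = 0
  · rw [if_pos h]
    refine Finset.sum_nbij' (fun p => p.1) (fun s => (s, s)) ?_ ?_ ?_ ?_ ?_
    · intro p hp
      rw [Finset.mem_filter, mem_Qn] at hp
      obtain ⟨⟨hc1, _, hsum⟩, heq⟩ := hp
      rw [← heq] at hsum
      exact mem_Cn.mpr ⟨by omega, hc1⟩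
    · intro s hs
      obtain ⟨hl, hc⟩ := mem_Cn.mp hs
      exact Finset.mem_filter.mpr ⟨mem_Qn.mpr ⟨hc, hc,
        show leavesBT s + leavesBT s = n by omega⟩, rfl⟩
    · intro p hp
      rw [Finset.mem_filter] at hp
      exact Prod.ext rfl hp.2
    · intro s _
      rfl
    · intro p hp
      rw [Finset.mem_filter] at hp
      rw [← hp.2, two_mul]
  · rw [if_neg h]
    rw [Finset.sum_eq_zero]
    intro p hp
    rw [Finset.mem_filter, mem_Qn] at hp
    obtain ⟨⟨_, _, hsum⟩, heq⟩ := hp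
    rw [← heq] at hsum
    omega

theorem key_identity (n : ℕ) (hn : 2 ≤ n) :
    ∑ t ∈ Cn n, (Polynomial.X : Polynomial ℚ) ^ symBT t
      = Polynomial.C (1 / 2 : ℚ) *
          (∑ p ∈ Qn n, (Polynomial.X : Polynomial ℚ) ^ (symBT p.1 + symBT p.2))
        + (Polynomial.X - Polynomial.C (1 / 2 : ℚ)) *
          (if n % 2 = 0 then
            ∑ s ∈ Cn (n / 2), (Polynomial.X : Polynomial ℚ) ^ (2 * symBT s) else 0) := by
  classical
  set f : BT × BT → Polynomial ℚ :=
    fun p => (Polynomial.X : Polynomial ℚ) ^ (symBT p.1 + symBT p.2) with hf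
  set A : Finset (BT × BT) := (Qn n).filter (fun p => enc p.1 < enc p.2) with hA
  set Dg : Finset (BT × BT) := (Qn n).filter (fun p => p.1 = p.2) with hDg
  have encne : ∀ p : BT × BT, p.1 ≠ p.2 ↔ enc p.1 ≠ enc p.2 := fun p =>
    (Function.Injective.ne_iff enc_injective).symm
  -- Pn splits into Dg and A
  have hfilter1 : ((Qn n).filter (fun p => enc p.1 ≤ enc p.2)).filter (fun p => p.1 = p.2)
      = Dg := by
    rw [Finset.filter_filter, hDg]
    refine Finset.filter_congr fun p _ => ?_
    constructor
    · rintro ⟨_, h⟩; exact h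
    · rintro h; exact ⟨le_of_eq (by rw [h]), h⟩
  have hfilter2 : ((Qn n).filter (fun p => enc p.1 ≤ enc p.2)).filter (fun p => ¬ p.1 = p.2)
      = A := by
    rw [Finset.filter_filter, hA]
    refine Finset.filter_congr fun p _ => ?_
    rw [lt_iff_le_and_ne]
    constructor
    · rintro ⟨h1, h2⟩; exact ⟨h1, (encne p).mp h2⟩
    · rintro ⟨h1, h2⟩; exact ⟨h1, fun h => h2 (by rw [h])⟩
  -- the complement of Pn maps bijectively to A by swapping
  have hswap : ∑ p ∈ (Qn n).filter (fun p => ¬ enc p.1 ≤ enc p.2), f p = ∑ p ∈ A, f p := by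
    refine Finset.sum_nbij' (fun p => p.swap) (fun p => p.swap) ?_ ?_ ?_ ?_ ?_
    · intro p hp
      rw [Finset.mem_filter, mem_Qn] at hp
      rw [hA, Finset.mem_filter, mem_Qn]
      exact ⟨⟨hp.1.2.1, hp.1.1, by rw [add_comm]; exact hp.1.2.2⟩,
        lt_of_not_ge hp.2⟩
    · intro p hp
      rw [hA, Finset.mem_filter, mem_Qn] at hp
      rw [Finset.mem_filter, mem_Qn]
      exact ⟨⟨hp.1.2.1, hp.1.1, by rw [add_comm]; exact hp.1.2.2⟩,
        not_le.mpr hp.2⟩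
    · intro p _; rfl
    · intro p _; rfl
    · intro p _
      show f p = f p.swap
      rcases p with ⟨a, b⟩
      rw [hf]
      dsimp
      rw [add_comm]
  -- sum over Qn
  have hQ : ∑ p ∈ Qn n, f p = ∑ p ∈ A, f p + ∑ p ∈ Dg, f p + ∑ p ∈ A, f p := by
    rw [← Finset.sum_filter_add_sum_filter_not (Qn n) (fun p => enc p.1 ≤ enc p.2) f,
      ← Finset.sum_filter_add_sum_filter_not ((Qn n).filter (fun p => enc p.1 ≤ enc p.2))
        (fun p => p.1 = p.2) f, hfilter1, hfilter2, hswap]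
    ring
  -- sum over Pn with the symmetric marker
  have hP : ∑ p ∈ (Qn n).filter (fun p => enc p.1 ≤ enc p.2),
      (Polynomial.X : Polynomial ℚ) ^ (symBT p.1 + symBT p.2 + if p.1 = p.2 then 1 else 0)
      = ∑ p ∈ A, f p + Polynomial.X * ∑ p ∈ Dg, f p := by
    rw [← Finset.sum_filter_add_sum_filter_not ((Qn n).filter (fun p => enc p.1 ≤ enc p.2))
      (fun p => p.1 = p.2), hfilter1, hfilter2]
    rw [add_comm]
    congr 1
    · refine Finset.sum_congr rfl fun p hp => ?_
      rw [hA, Finset.mem_filter] at hp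
      have : p.1 ≠ p.2 := (encne p).mpr (ne_of_lt hp.2)
      rw [if_neg this, add_zero]
    · rw [Finset.mul_sum]
      refine Finset.sum_congr rfl fun p hp => ?_
      rw [hDg, Finset.mem_filter] at hp
      rw [if_pos hp.2, hf]
      rw [pow_succ, mul_comm]
  rw [Sn_node n hn, hP, hQ, ← sum_Dg_eq]
  have h2 : (2 : Polynomial ℚ) * Polynomial.C (1 / 2 : ℚ) = 1 := by
    rw [show (2 : Polynomial ℚ) = Polynomial.C (2 : ℚ) from (map_ofNat Polynomial.C 2).symm,
      ← Polynomial.C_mul]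
    norm_num
  linear_combination (-(∑ p ∈ A, f p)) * h2

theorem coeff_Fgen2 (n : ℕ) :
    PowerSeries.coeff (R := Polynomial ℚ) n Fgen2
      = if n % 2 = 0 then
          ∑ s ∈ Cn (n / 2), (Polynomial.X : Polynomial ℚ) ^ (2 * symBT s) else 0 := by
  rw [Fgen2, PowerSeries.coeff_mk]
  split_ifs with h
  · rw [coeff_Fgen, Polynomial.sum_comp]
    refine Finset.sum_congr rfl fun s _ => ?_
    rw [Polynomial.pow_comp, Polynomial.X_comp, ← pow_mul, mul_comm]
  · rfl

/-- `F(z,u) = z + (1/2) F(z,u)² + (u − 1/2) F(z², u²)`. -/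
theorem F_functional_equation :
    Fgen = PowerSeries.X
      + PowerSeries.C (R := Polynomial ℚ) (Polynomial.C (1 / 2 : ℚ)) * Fgen ^ 2
      + PowerSeries.C (R := Polynomial ℚ) (Polynomial.X - Polynomial.C (1 / 2 : ℚ)) * Fgen2 := by
  refine PowerSeries.ext fun n => ?_
  rw [map_add, map_add, PowerSeries.coeff_X, PowerSeries.coeff_C_mul, PowerSeries.coeff_C_mul,
    sq, PowerSeries.coeff_mul, coeff_Fgen2]
  simp_rw [coeff_Fgen]
  match n with
  | 0 =>
      simp [Cn_zero]
  | 1 =>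
      have hz : ∑ ab ∈ Finset.HasAntidiagonal.antidiagonal 1,
          (∑ t ∈ Cn ab.1, (Polynomial.X : Polynomial ℚ) ^ symBT t) *
            (∑ t ∈ Cn ab.2, (Polynomial.X : Polynomial ℚ) ^ symBT t) = 0 := by
        refine Finset.sum_eq_zero fun ab hab => ?_
        rw [Finset.HasAntidiagonal.mem_antidiagonal] at hab
        by_cases h1 : ab.1 = 0
        · rw [h1, Cn_zero, Finset.sum_empty, zero_mul]
        · have h2 : ab.2 = 0 := by omega
          rw [h2, Cn_zero, Finset.sum_empty, mul_zero]
      rw [hz, Cn_one]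
      norm_num [symBT]
  | (n + 2) =>
      rw [key_identity (n + 2) (by omega), sum_Qn_eq_antidiag,
        if_neg (show ¬(n + 2 = 1) by omega)]
      ring
end

section
/- The specialization F(z, 1/2) of the bivariate generating function of Otter trees by symmetrical nodes equals the exponential generating function of phylogenetic trees: Σ_{t ∈ U} (1/2)^{sym(t)} z^{|t|} = Σ_{n≥1} (2n-3)!! z^n/n!. -/
open scoped Classical

/-! ### Auxiliary development -/

deriving instance DecidableEq for BT

theorem BT.one_le_leaves : ∀ t : BT, 1 ≤ leavesBT t
  | .leaf => le_refl 1
  | .node l r => by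
      have := BT.one_le_leaves l
      simp only [leavesBT]; omega

/-- All plane binary trees with exactly `n` leaves. -/
def allBT : ℕ → Finset BT
  | 0 => ∅
  | 1 => {.leaf}
  | (n+2) =>
      (Finset.range (n+1)).attach.biUnion fun i =>
        ((allBT (i.1+1)) ×ˢ (allBT (n+1-i.1))).image fun p => BT.node p.1 p.2
  decreasing_by
  · have := Finset.mem_range.1 i.2; omega
  · have := Finset.mem_range.1 i.2; omega

theorem mem_allBT : ∀ (t : BT) (n : ℕ), t ∈ allBT n ↔ leavesBT t = n := by
  intro t
  induction t with
  | leaf =>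
      intro n
      match n with
      | 0 => simp [allBT, leavesBT]
      | 1 => simp [allBT, leavesBT]
      | (n+2) => simp [allBT, leavesBT]
  | node l r ihl ihr =>
      intro n
      have hl := BT.one_le_leaves l
      have hr := BT.one_le_leaves r
      match n with
      | 0 => simp only [allBT, Finset.notMem_empty, false_iff, leavesBT]; omega
      | 1 => simp only [allBT, Finset.mem_singleton, leavesBT]
             constructor
             · intro h; exact absurd h (by simp)
             · intro h; omega
      | (n+2) =>
        simp only [allBT, Finset.mem_biUnion, Finset.mem_attach, true_and,
          Finset.mem_image, Finset.mem_product, Subtype.exists, Finset.mem_range, leavesBT]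
        constructor
        · rintro ⟨i, hi, ⟨a, b⟩, ⟨ha, hb⟩, heq⟩
          obtain ⟨rfl, rfl⟩ : a = l ∧ b = r := by
            injection heq with h1 h2; exact ⟨h1, h2⟩
          rw [ihl] at ha; rw [ihr] at hb
          omega
        · intro h
          refine ⟨leavesBT l - 1, by omega, ⟨l, r⟩, ⟨?_, ?_⟩, rfl⟩
          · rw [ihl]; omega
          · rw [ihr]; omega

noncomputable instance fintypeBTleaves (n : ℕ) : Fintype {b : BT // leavesBT b = n} :=
  Fintype.subtype (allBT n) (fun t => mem_allBT t n)

theorem Otter.leaves_mk (t : BT) : Otter.leaves ⟦t⟧ = leavesBT t := rfl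

theorem Otter.sym_mk (t : BT) : Otter.sym ⟦t⟧ = symBT t := rfl

noncomputable instance fintypeOtterN (n : ℕ) : Fintype (OtterN n) := by
  have : Finite (OtterN n) := by
    apply Finite.of_surjective
      (fun b : {b : BT // leavesBT b = n} => (⟨⟦b.1⟧, b.2⟩ : OtterN n))
    rintro ⟨q, hq⟩
    obtain ⟨t, rfl⟩ := Quotient.exists_rep q
    exact ⟨⟨t, hq⟩, rfl⟩
  exact Fintype.ofFinite _

noncomputable instance (n : ℕ) : Fintype {q : Otter // q.leaves = n} := fintypeOtterN n

theorem Otter.one_le_leaves (q : Otter) : 1 ≤ q.leaves := by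
  obtain ⟨t, rfl⟩ := Quotient.exists_rep q
  exact BT.one_le_leaves t

/-- Joining two Otter trees at a new root. -/
def Otter.node : Otter → Otter → Otter :=
  Quotient.map₂ BT.node fun _ _ h1 _ _ h2 => Iso.node h1 h2

theorem Otter.node_mk (l r : BT) : Otter.node ⟦l⟧ ⟦r⟧ = ⟦BT.node l r⟧ := rfl

theorem Otter.leaves_node (a b : Otter) :
    (Otter.node a b).leaves = a.leaves + b.leaves := by
  obtain ⟨l, rfl⟩ := Quotient.exists_rep a
  obtain ⟨r, rfl⟩ := Quotient.exists_rep b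
  rfl

theorem Otter.mk_eq_mk_iff_iso {l r : BT} : (⟦l⟧ : Otter) = ⟦r⟧ ↔ Iso l r :=
  ⟨fun h => Quotient.exact h, fun h => Quotient.sound h⟩

theorem Otter.sym_node (a b : Otter) :
    (Otter.node a b).sym = a.sym + b.sym + (if a = b then 1 else 0) := by
  obtain ⟨l, rfl⟩ := Quotient.exists_rep a
  obtain ⟨r, rfl⟩ := Quotient.exists_rep b
  rw [Otter.node_mk, Otter.sym_mk, Otter.sym_mk, Otter.sym_mk]
  show symBT l + symBT r + _ = _
  congr 1
  exact if_congr Otter.mk_eq_mk_iff_iso.symm rfl rfl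

theorem Otter.node_eq_node {a b c d : Otter} :
    Otter.node a b = Otter.node c d ↔ (a = c ∧ b = d) ∨ (a = d ∧ b = c) := by
  obtain ⟨ta, rfl⟩ := Quotient.exists_rep a
  obtain ⟨tb, rfl⟩ := Quotient.exists_rep b
  obtain ⟨tc, rfl⟩ := Quotient.exists_rep c
  obtain ⟨td, rfl⟩ := Quotient.exists_rep d
  erw [Otter.node_mk, Otter.node_mk, Otter.mk_eq_mk_iff_iso,
    Otter.mk_eq_mk_iff_iso, Otter.mk_eq_mk_iff_iso, Otter.mk_eq_mk_iff_iso,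
    Otter.mk_eq_mk_iff_iso]
  constructor
  · intro h
    cases h with
    | node h1 h2 => exact Or.inl ⟨h1, h2⟩
    | swap h1 h2 => exact Or.inr ⟨h1, h2⟩
  · rintro (⟨h1, h2⟩ | ⟨h1, h2⟩)
    · exact Iso.node h1 h2
    · exact Iso.swap h1 h2

theorem Otter.exists_node {q : Otter} (h : 2 ≤ q.leaves) :
    ∃ a b, q = Otter.node a b := by
  obtain ⟨t, rfl⟩ := Quotient.exists_rep q
  cases t with
  | leaf => rw [Otter.leaves_mk] at h; simp [leavesBT] at h
  | node l r => exact ⟨⟦l⟧, ⟦r⟧, rfl⟩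

/-- The finset of Otter trees with `n` leaves. -/
noncomputable def UN (n : ℕ) : Finset Otter := (allBT n).image (fun t => ⟦t⟧)

theorem mem_UN {q : Otter} {n : ℕ} : q ∈ UN n ↔ q.leaves = n := by
  unfold UN
  erw [Finset.mem_image]
  constructor
  · rintro ⟨t, ht, rfl⟩; exact (mem_allBT t n).1 ht
  · intro h
    obtain ⟨t, rfl⟩ := Quotient.exists_rep q
    exact ⟨t, (mem_allBT t n).2 h, rfl⟩

/-- The coefficient sum `Σ_{t ∈ U_n} (1/2)^{sym t}`. -/
noncomputable def Scoef (n : ℕ) : ℚ := ∑ q ∈ UN n, ((1:ℚ)/2) ^ q.sym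

theorem finsum_eq_Scoef (n : ℕ) :
    ∑ᶠ t : OtterN n, ((1 : ℚ) / 2) ^ t.1.sym = Scoef n := by
  rw [finsum_eq_sum_of_fintype, Scoef,
    ← Finset.sum_coe_sort (UN n) (fun q => ((1:ℚ)/2) ^ Otter.sym q)]
  exact Fintype.sum_equiv (Equiv.subtypeEquivRight fun q => mem_UN.symm)
    _ _ (fun t => rfl)

/-- Pairs of Otter trees with total number of leaves `n`. -/
noncomputable def PairsN (n : ℕ) : Finset (Otter × Otter) :=
  (Finset.Ico 1 n).biUnion fun i => UN i ×ˢ UN (n - i)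

theorem mem_PairsN {n : ℕ} {p : Otter × Otter} :
    p ∈ PairsN n ↔ p.1.leaves + p.2.leaves = n := by
  simp only [PairsN, Finset.mem_biUnion, Finset.mem_Ico, Finset.mem_product, mem_UN]
  constructor
  · rintro ⟨i, ⟨h1, h2⟩, ha, hb⟩
    have := Otter.one_le_leaves p.2
    omega
  · intro h
    have h1 := Otter.one_le_leaves p.1
    have h2 := Otter.one_le_leaves p.2
    exact ⟨p.1.leaves, ⟨h1, by omega⟩, rfl, by omega⟩

theorem sum_PairsN (n : ℕ) (f : Otter × Otter → ℚ) :
    ∑ p ∈ PairsN n, f p = ∑ i ∈ Finset.Ico 1 n, ∑ p ∈ UN i ×ˢ UN (n-i), f p := by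
  refine Finset.sum_biUnion ?_
  intro i _ j _ hij
  simp only [Finset.disjoint_left]
  rintro ⟨a, b⟩ ha hb
  rw [Finset.mem_product, mem_UN, mem_UN] at ha hb
  exact hij (ha.1.symm.trans hb.1)

theorem fiber_eq {n : ℕ} {q a b : Otter} (hq : q.leaves = n) (hab : q = Otter.node a b) :
    (PairsN n).filter (fun p => Otter.node p.1 p.2 = q) = {(a, b), (b, a)} := by
  ext p
  simp only [Finset.mem_filter, mem_PairsN, Finset.mem_insert, Finset.mem_singleton]
  constructor
  · rintro ⟨-, h⟩
    rw [hab] at h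
    rcases Otter.node_eq_node.1 h with ⟨h1, h2⟩ | ⟨h1, h2⟩
    · left; exact Prod.ext h1 h2
    · right; exact Prod.ext h1 h2
  · have hleaves : a.leaves + b.leaves = n := by
      rw [← Otter.leaves_node, ← hab]; exact hq
    rintro (rfl | rfl)
    · exact ⟨hleaves, hab.symm⟩
    · refine ⟨show b.leaves + a.leaves = n by omega, ?_⟩
      rw [hab]
      exact Otter.node_eq_node.2 (Or.inr ⟨rfl, rfl⟩)

theorem fiber_sum {n : ℕ} {q : Otter} (hq : q.leaves = n) (hn : 2 ≤ n) :
    ∑ p ∈ (PairsN n).filter (fun p => Otter.node p.1 p.2 = q),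
        ((1:ℚ)/2) ^ p.1.sym * ((1:ℚ)/2) ^ p.2.sym = 2 * ((1:ℚ)/2) ^ q.sym := by
  obtain ⟨a, b, hab⟩ := Otter.exists_node (show 2 ≤ q.leaves by omega)
  rw [fiber_eq hq hab]
  have hsym : q.sym = a.sym + b.sym + (if a = b then 1 else 0) := by
    rw [hab, Otter.sym_node]
  by_cases h : a = b
  · subst h
    rw [if_pos rfl] at hsym
    rw [show ({(a, a), (a, a)} : Finset (Otter × Otter)) = {(a, a)} by simp,
      Finset.sum_singleton, hsym, pow_succ, pow_add]
    ring
  · have hne : ((a, b) : Otter × Otter) ≠ (b, a) := by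
      intro hcon
      exact h (congrArg Prod.fst hcon)
    rw [if_neg h, add_zero] at hsym
    rw [Finset.sum_pair hne, hsym, pow_add]
    ring

theorem Scoef_rec {n : ℕ} (hn : 2 ≤ n) :
    ∑ i ∈ Finset.Ico 1 n, Scoef i * Scoef (n - i) = 2 * Scoef n := by
  have h1 : ∀ i, Scoef i * Scoef (n-i)
      = ∑ p ∈ UN i ×ˢ UN (n-i), ((1:ℚ)/2) ^ p.1.sym * ((1:ℚ)/2) ^ p.2.sym := by
    intro i
    rw [Scoef, Scoef, Finset.sum_mul_sum, Finset.sum_product]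
  calc ∑ i ∈ Finset.Ico 1 n, Scoef i * Scoef (n-i)
      = ∑ p ∈ PairsN n, ((1:ℚ)/2) ^ p.1.sym * ((1:ℚ)/2) ^ p.2.sym := by
        rw [sum_PairsN]; exact Finset.sum_congr rfl fun i _ => h1 i
    _ = ∑ q ∈ UN n, ∑ p ∈ (PairsN n).filter (fun p => Otter.node p.1 p.2 = q),
          ((1:ℚ)/2) ^ p.1.sym * ((1:ℚ)/2) ^ p.2.sym := by
        refine (Finset.sum_fiberwise_of_maps_to ?_ _).symm
        intro p hp
        rw [mem_UN, Otter.leaves_node]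
        exact mem_PairsN.1 hp
    _ = ∑ q ∈ UN n, 2 * ((1:ℚ)/2) ^ q.sym :=
        Finset.sum_congr rfl fun q hq => fiber_sum (mem_UN.1 hq) hn
    _ = 2 * Scoef n := by rw [Scoef, Finset.mul_sum]

theorem UN_one : UN 1 = {(⟦BT.leaf⟧ : Otter)} := by
  ext q
  erw [mem_UN, Finset.mem_singleton]
  constructor
  · intro h
    obtain ⟨t, rfl⟩ := Quotient.exists_rep q
    cases t with
    | leaf => rfl
    | node l r =>
        exfalso
        have h1 := BT.one_le_leaves l
        have h2 := BT.one_le_leaves r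
        rw [Otter.leaves_mk] at h
        simp only [leavesBT] at h
        omega
  · rintro rfl; rfl

theorem Scoef_one : Scoef 1 = 1 := by
  erw [Scoef, UN_one, Finset.sum_singleton, Otter.sym_mk]
  norm_num [symBT]

theorem doubleFac_step {n : ℕ} (hn : 1 ≤ n) :
    doubleFac (2*(n+1) - 3) = (2*n - 1) * doubleFac (2*n - 3) := by
  match n, hn with
  | 1, _ => decide
  | (m+2), _ =>
    have h1 : 2*(m+3) - 3 = (2*m+1) + 2 := by omega
    have h2 : 2*(m+2) - 3 = 2*m+1 := by omega
    have h3 : 2*(m+2) - 1 = 2*m+3 := by omega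
    rw [h1, h2, h3]
    show (2*m+1+2) * doubleFac (2*m+1) = _
    congr 1

open Nat in
theorem catalan_step (n : ℕ) :
    (n + 2) * catalan (n+1) = 2 * (2*n + 1) * catalan n := by
  have h1 := succ_mul_catalan_eq_centralBinom (n+1)
  have h2 := Nat.succ_mul_centralBinom_succ n
  have h3 := succ_mul_catalan_eq_centralBinom n
  have h4 : (n+1) * ((n+2) * catalan (n+1)) = (n+1) * (2*(2*n+1) * catalan n) := by
    rw [h1]
    calc (n+1) * centralBinom (n+1) = 2*(2*n+1) * centralBinom n := h2
      _ = 2*(2*n+1) * ((n+1) * catalan n) := by rw [h3]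
      _ = (n+1) * (2*(2*n+1) * catalan n) := by ring
  exact Nat.eq_of_mul_eq_mul_left (by omega) h4

open Nat in
theorem doubleFac_fac {n : ℕ} (hn : 1 ≤ n) :
    doubleFac (2*n - 3) * 2^(n-1) = catalan (n-1) * n.factorial := by
  induction n, hn using Nat.le_induction with
  | base => simp [doubleFac, catalan]
  | succ n hn ih =>
    obtain ⟨m, rfl⟩ : ∃ m, n = m + 1 := ⟨n - 1, by omega⟩
    rw [doubleFac_step (by omega)]
    have e1 : m + 1 + 1 - 1 = (m + 1 - 1) + 1 := by omega
    have e2 : 2*(m+1) - 1 = 2*m+1 := by omega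
    have e3 : m + 1 - 1 = m := by omega
    calc (2*(m+1)-1) * doubleFac (2*(m+1)-3) * 2^(m+1+1-1)
        = 2*(2*m+1) * (doubleFac (2*(m+1)-3) * 2^(m+1-1)) := by
          rw [e1, e2, pow_succ]; ring
      _ = 2*(2*m+1) * (catalan (m+1-1) * (m+1).factorial) := by rw [ih]
      _ = (2*(2*m+1) * catalan m) * (m+1).factorial := by rw [e3]; ring
      _ = ((m+2) * catalan (m+1)) * (m+1).factorial := by rw [← catalan_step]
      _ = catalan (m+1+1-1) * (m+1+1).factorial := by
          rw [Nat.factorial_succ (m+1)]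
          simp only [Nat.add_sub_cancel]
          ring

open Nat in
theorem catalan_conv {n : ℕ} (hn : 2 ≤ n) :
    ∑ i ∈ Finset.Ico 1 n, catalan (i-1) * catalan (n-i-1) = catalan (n-1) := by
  rw [Finset.sum_Ico_eq_sum_range]
  have h : n - 1 = (n-2) + 1 := by omega
  rw [h, catalan_succ', Finset.Nat.sum_antidiagonal_eq_sum_range_succ_mk]
  refine Finset.sum_congr rfl ?_
  intro i hi
  rw [Finset.mem_range] at hi
  congr 1
  · congr 1; omega
  · congr 1; omega

theorem Scoef_eq : ∀ n : ℕ, 1 ≤ n → Scoef n * 2^(n-1) = (catalan (n-1) : ℚ) := by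
  intro n
  induction n using Nat.strong_induction_on with
  | _ n ih =>
  intro hn
  rcases eq_or_lt_of_le hn with h1 | h1
  · rw [← h1]
    simp [Scoef_one]
  · have hn2 : 2 ≤ n := h1
    have key := Scoef_rec hn2
    have hmain : ∀ i ∈ Finset.Ico 1 n,
        Scoef i * Scoef (n-i) * 2^(n-2)
          = (catalan (i-1) : ℚ) * (catalan (n-i-1) : ℚ) := by
      intro i hi
      rw [Finset.mem_Ico] at hi
      have h2 : (2:ℚ)^(n-2) = 2^(i-1) * 2^(n-i-1) := by
        rw [← pow_add]; congr 1; omega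
      have ihi := ih i hi.2 hi.1
      have ihn : Scoef (n-i) * 2^(n-i-1) = (catalan (n-i-1) : ℚ) :=
        ih (n-i) (by omega) (by omega)
      calc Scoef i * Scoef (n-i) * 2^(n-2)
          = (Scoef i * 2^(i-1)) * (Scoef (n-i) * 2^(n-i-1)) := by rw [h2]; ring
        _ = (catalan (i-1) : ℚ) * (catalan (n-i-1) : ℚ) := by rw [ihi, ihn]
    calc Scoef n * 2^(n-1)
        = (2 * Scoef n) * 2^(n-2) := by
          rw [show n - 1 = (n-2)+1 by omega, pow_succ]; ring
      _ = ∑ i ∈ Finset.Ico 1 n, Scoef i * Scoef (n-i) * 2^(n-2) := by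
          rw [← key, Finset.sum_mul]
      _ = ∑ i ∈ Finset.Ico 1 n, (catalan (i-1) : ℚ) * (catalan (n-i-1) : ℚ) :=
          Finset.sum_congr rfl hmain
      _ = (catalan (n-1) : ℚ) := by
          norm_cast
          exact catalan_conv hn2

/-- `F(z, 1/2)` is the EGF of phylogenetic trees; coefficient-wise,
`Σ_{t ∈ U_n} (1/2)^{sym t} = (2n-3)!!/n!` for every `n ≥ 1`. -/
theorem F_at_half (n : ℕ) (hn : 1 ≤ n) :
    ∑ᶠ t : OtterN n, ((1 : ℚ) / 2) ^ t.1.sym =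
      (doubleFac (2 * n - 3) : ℚ) / n.factorial := by
  rw [finsum_eq_Scoef]
  have h1 := Scoef_eq n hn
  have h2 := doubleFac_fac hn
  have h2' : (doubleFac (2*n-3) : ℚ) * 2^(n-1) = (catalan (n-1) : ℚ) * n.factorial := by
    exact_mod_cast h2
  have hfac : (n.factorial : ℚ) ≠ 0 := by
    exact_mod_cast n.factorial_ne_zero
  have hpow : ((2:ℚ))^(n-1) ≠ 0 := by positivity
  rw [eq_div_iff hfac]
  apply mul_right_cancel₀ hpow
  calc Scoef n * (n.factorial : ℚ) * 2^(n-1)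
      = (Scoef n * 2^(n-1)) * n.factorial := by ring
    _ = (catalan (n-1) : ℚ) * n.factorial := by rw [h1]
    _ = (doubleFac (2*n-3) : ℚ) * 2^(n-1) := h2'.symm
end
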